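/- For every integer n ≥ 1, the sum of the Ramanujan–Shor polynomials over the second index satisfies ∑_{k=0}^{n−1} Q_{n,k}(x) = (x+n)^{n−1}, as an identity in the polynomial ring ℚ[x]. -/

import Mathlib

open Polynomial

/-- The Ramanujan–Shor polynomials `Q n k ∈ ℚ[x]`. -/
noncomputable def ramanujanShorQ : ℕ → ℤ → Polynomial ℚ
  | 0, _ => 0
  | 1, k => if k = 0 then 1 else 0
  | (n + 2), k =>
      if 0 ≤ k ∧ k ≤ (n : ℤ) + 1 then
        (Polynomial.X + Polynomial.C ((n : ℚ) + 1)) * ramanujanShorQ (n + 1) k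
          + Polynomial.C (((n : ℤ) + k : ℤ) : ℚ) * ramanujanShorQ (n + 1) (k - 1)
      else 0

/-- `Q n k = 0` for negative `k`. -/
lemma ramanujanShorQ_neg : ∀ (n : ℕ) (k : ℤ), k < 0 → ramanujanShorQ n k = 0
  | 0, k, _ => rfl
  | 1, k, h => by
      simp only [ramanujanShorQ, ite_eq_right_iff]
      intro hk; omega
  | (n + 2), k, h => by
      simp only [ramanujanShorQ]
      rw [if_neg]
      rintro ⟨h0, _⟩; omega

/-- `Q n k = 0` for `k ≥ n`. -/
lemma ramanujanShorQ_ge : ∀ (n : ℕ) (k : ℤ), (n : ℤ) ≤ k → ramanujanShorQ n k = 0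
  | 0, k, _ => rfl
  | 1, k, h => by
      simp only [ramanujanShorQ, ite_eq_right_iff]
      intro hk
      exfalso
      rw [hk] at h
      norm_num at h
  | (n + 2), k, h => by
      simp only [ramanujanShorQ]
      rw [if_neg]
      rintro ⟨_, h1⟩
      push_cast at h
      omega

/-- The defining recurrence, without the range condition. -/
lemma ramanujanShorQ_rec (n : ℕ) (k : ℤ) :
    ramanujanShorQ (n + 2) k
      = (X + C ((n : ℚ) + 1)) * ramanujanShorQ (n + 1) k
          + C (((n : ℤ) + k : ℤ) : ℚ) * ramanujanShorQ (n + 1) (k - 1) := by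
  by_cases h : 0 ≤ k ∧ k ≤ (n : ℤ) + 1
  · simp only [ramanujanShorQ]
    rw [if_pos h]
  · simp only [ramanujanShorQ]
    rw [if_neg h]
    rcases (by omega : k < 0 ∨ (n : ℤ) + 2 ≤ k) with h' | h'
    · rw [ramanujanShorQ_neg _ _ h', ramanujanShorQ_neg _ _ (by omega)]
      ring
    · rw [ramanujanShorQ_ge (n + 1) k (by push_cast; omega),
        ramanujanShorQ_ge (n + 1) (k - 1) (by push_cast; omega)]
      ring

/-- Shift `x ↦ x + 1` as an algebra homomorphism. -/
noncomputable def rsShift : Polynomial ℚ →ₐ[ℚ] Polynomial ℚ :=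
  aeval (X + C 1)

/-- The key identity: `Q n k (x) = (n+k-2) Q (n-1) (k-1) (x+1) + (x+1-k) Q (n-1) k (x+1)`. -/
lemma ramanujanShorQ_key : ∀ (n : ℕ) (k : ℤ),
    ramanujanShorQ (n + 2) k
      = C (((n : ℤ) + k : ℤ) : ℚ) * rsShift (ramanujanShorQ (n + 1) (k - 1))
          + (X + C 1 - C (k : ℚ)) * rsShift (ramanujanShorQ (n + 1) k) := by
  intro n
  induction n with
  | zero =>
    intro k
    rw [ramanujanShorQ_rec 0 k]
    by_cases h0 : k = 0
    · subst h0
      norm_num [ramanujanShorQ, rsShift]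
    · by_cases h1 : k = 1
      · subst h1
        norm_num [ramanujanShorQ, rsShift]
      · have e1 : ramanujanShorQ 1 k = 0 := by
          simp only [ramanujanShorQ, ite_eq_right_iff]; intro hk; exact absurd hk h0
        have e2 : ramanujanShorQ 1 (k - 1) = 0 := by
          simp only [ramanujanShorQ, ite_eq_right_iff]; intro hk; omega
        rw [e1, e2]
        simp
  | succ n ih =>
    intro k
    rw [ramanujanShorQ_rec n k, ramanujanShorQ_rec n (k - 1),
      ramanujanShorQ_rec (n + 1) k, ih k, ih (k - 1)]
    simp only [map_add, map_mul, map_sub, map_one, aeval_X, aeval_C, rsShift,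
      Polynomial.algebraMap_eq]
    simp only [Int.cast_add, Int.cast_sub, Int.cast_natCast, Int.cast_one,
      Nat.cast_add, Nat.cast_one, C_add, C_sub, C_1]
    ring

theorem ramanujanShorQ_sum (n : ℕ) (hn : 1 ≤ n) :
    ∑ k ∈ Finset.range n, ramanujanShorQ n (k : ℤ)
      = (Polynomial.X + Polynomial.C (n : ℚ)) ^ (n - 1) := by
  induction n, hn using Nat.le_induction with
  | base => norm_num [ramanujanShorQ]
  | succ n hn ih =>
    obtain ⟨m, rfl⟩ : ∃ m, n = m + 1 := ⟨n - 1, by omega⟩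
    show ∑ k ∈ Finset.range (m + 2), ramanujanShorQ (m + 2) (k : ℤ) = _
    have hsplit : ∀ k ∈ Finset.range (m + 2),
        ramanujanShorQ (m + 2) (k : ℤ)
          = C (((m : ℤ) + k : ℤ) : ℚ) * rsShift (ramanujanShorQ (m + 1) ((k : ℤ) - 1))
              + (X + C 1 - C ((k : ℤ) : ℚ)) * rsShift (ramanujanShorQ (m + 1) (k : ℤ)) := by
      intro k _
      exact ramanujanShorQ_key m (k : ℤ)
    rw [Finset.sum_congr rfl hsplit, Finset.sum_add_distrib]
    -- first sum: reindex, the k = 0 term vanishes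
    rw [Finset.sum_range_succ' (fun k =>
      C (((m : ℤ) + k : ℤ) : ℚ) * rsShift (ramanujanShorQ (m + 1) ((k : ℤ) - 1))) (m + 1)]
    -- second sum: peel the top term, which vanishes
    rw [Finset.sum_range_succ (fun k =>
      (X + C 1 - C ((k : ℤ) : ℚ)) * rsShift (ramanujanShorQ (m + 1) (k : ℤ))) (m + 1)]
    have hz1 : ramanujanShorQ (m + 1) (((0 : ℕ) : ℤ) - 1) = 0 :=
      ramanujanShorQ_neg _ _ (by norm_num)
    have hz2 : ramanujanShorQ (m + 1) (((m + 1 : ℕ) : ℤ)) = 0 :=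
      ramanujanShorQ_ge _ _ (by push_cast; omega)
    rw [hz1, hz2]
    simp only [map_zero, mul_zero, add_zero]
    rw [← Finset.sum_add_distrib]
    have hterm : ∀ k ∈ Finset.range (m + 1),
        C (((m : ℤ) + ((k + 1 : ℕ) : ℤ) : ℤ) : ℚ)
            * rsShift (ramanujanShorQ (m + 1) (((k + 1 : ℕ) : ℤ) - 1))
          + (X + C 1 - C ((k : ℤ) : ℚ)) * rsShift (ramanujanShorQ (m + 1) (k : ℤ))
          = (X + C ((m : ℚ) + 1 + 1)) * rsShift (ramanujanShorQ (m + 1) (k : ℤ)) := by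
      intro k _
      have hidx : ((k + 1 : ℕ) : ℤ) - 1 = (k : ℤ) := by push_cast; ring
      have h1 : ((((m : ℤ) + ((k + 1 : ℕ) : ℤ)) : ℤ) : ℚ) = (m : ℚ) + (k : ℚ) + 1 := by
        push_cast; ring
      have h2 : (((k : ℤ)) : ℚ) = (k : ℚ) := by push_cast; ring
      rw [hidx, h1, h2]
      simp only [C_add, C_1]
      ring
    rw [Finset.sum_congr rfl hterm, ← Finset.mul_sum, ← map_sum, ih]
    simp only [Nat.add_sub_cancel]
    rw [map_pow]
    have e3 : rsShift (X + C (((m + 1 : ℕ)) : ℚ)) = X + C ((m : ℚ) + 1 + 1) := by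
      have h5 : (1 : ℚ) + ((m + 1 : ℕ) : ℚ) = (m : ℚ) + 1 + 1 := by push_cast; ring
      simp only [rsShift, map_add, aeval_X, aeval_C, Polynomial.algebraMap_eq]
      rw [add_assoc, ← C_add, h5]
      simp [C_add]
    have e4 : C (((m + 1 + 1 : ℕ)) : ℚ) = C ((m : ℚ) + 1 + 1) := by
      have h6 : ((m + 1 + 1 : ℕ) : ℚ) = (m : ℚ) + 1 + 1 := by push_cast; ring
      rw [h6]
    rw [e3, e4, ← pow_succ']
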